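/- Let f : ℕ → ℝ be an additive function (f(mn) = f(m) + f(n) whenever gcd(m,n) = 1) such that there exist constants C > 0 and 0 < δ ≤ 1 with |f(p^v)| ≤ C/p^δ for all primes p and all v ≥ 1, and such that for every sufficiently small t > 0 there exists a prime p with t - t^{1+λ} ≤ f(p) ≤ t, where λ > 0. Then δ·λ < 1. -/

import Mathlib

set_option maxHeartbeats 1000000

open Filter Real

lemma aux_sum_tendsto :
    Tendsto (fun n : ℕ => ∑ p ∈ n.primesBelow, (1 / p : ℝ)) atTop atTop := by
  have h0 : ∀ n : ℕ, 0 ≤ Set.indicator {p : ℕ | p.Prime} (fun n : ℕ => (1 : ℝ) / n) n :=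
    fun n => Set.indicator_nonneg (fun i _ => by positivity) n
  have h := (not_summable_iff_tendsto_nat_atTop_of_nonneg h0).mp
    not_summable_one_div_on_primes
  convert h using 2 with n
  rw [Nat.primesBelow, Finset.sum_filter]
  refine Finset.sum_congr rfl fun i _ => ?_
  by_cases hi : i.Prime <;> simp [Set.indicator_apply, hi]

lemma aux_prod_tendsto :
    Tendsto (fun n : ℕ => ∏ p ∈ n.primesBelow, (1 - (p : ℝ)⁻¹)) atTop (nhds 0) := by
  have hfac : ∀ n : ℕ, ∀ p ∈ n.primesBelow, (0 : ℝ) ≤ 1 - (p : ℝ)⁻¹ := by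
    intro n p hp
    have hp2 : (2 : ℝ) ≤ (p : ℝ) := by
      exact_mod_cast (Nat.prime_of_mem_primesBelow hp).two_le
    have : (p : ℝ)⁻¹ ≤ 1 / 2 := by
      rw [inv_eq_one_div]
      exact (div_le_div_of_nonneg_left (by norm_num) (by norm_num) hp2 : (1:ℝ)/p ≤ 1/2)
    linarith
  have hub : ∀ n : ℕ, ∏ p ∈ n.primesBelow, (1 - (p : ℝ)⁻¹) ≤
      Real.exp (-(∑ p ∈ n.primesBelow, (1 / p : ℝ))) := by
    intro n
    calc ∏ p ∈ n.primesBelow, (1 - (p : ℝ)⁻¹)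
        ≤ ∏ p ∈ n.primesBelow, Real.exp (-(p : ℝ)⁻¹) := by
          refine Finset.prod_le_prod (hfac n) fun p hp => ?_
          have := Real.add_one_le_exp (-(p : ℝ)⁻¹)
          linarith
      _ = Real.exp (∑ p ∈ n.primesBelow, -(p : ℝ)⁻¹) := (Real.exp_sum _ _).symm
      _ = Real.exp (-(∑ p ∈ n.primesBelow, (1 / p : ℝ))) := by
          rw [← Finset.sum_neg_distrib]
          simp [one_div]
  have hlb : ∀ n : ℕ, (0 : ℝ) ≤ ∏ p ∈ n.primesBelow, (1 - (p : ℝ)⁻¹) :=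
    fun n => Finset.prod_nonneg (hfac n)
  have hexp : Tendsto (fun n : ℕ => Real.exp (-(∑ p ∈ n.primesBelow, (1 / p : ℝ))))
      atTop (nhds 0) :=
    Real.tendsto_exp_neg_atTop_nhds_zero.comp aux_sum_tendsto
  exact tendsto_of_tendsto_of_tendsto_of_le_of_le tendsto_const_nhds hexp hlb hub

lemma aux_primesBelow_card_le (ε : ℝ) (hε : 0 < ε) :
    ∃ c : ℝ, 0 ≤ c ∧ ∀ n : ℕ, ((n.primesBelow.card : ℝ)) ≤ ε * n + c := by
  obtain ⟨m, hm⟩ := ((tendsto_order.mp aux_prod_tendsto).2 ε hε).exists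
  set a : ℕ := ∏ p ∈ m.primesBelow, p with ha
  have hap : ∀ p ∈ m.primesBelow, p.Prime := fun p hp => Nat.prime_of_mem_primesBelow hp
  have ha0 : 0 < a := Finset.prod_pos fun p hp => (hap p hp).pos
  have hfact : a.primeFactors = m.primesBelow := Nat.primeFactors_prod hap
  set Pr : ℝ := ∏ p ∈ m.primesBelow, (1 - (p : ℝ)⁻¹) with hPrdef
  have hPr0 : 0 ≤ Pr := Finset.prod_nonneg fun p hp => by
    have hp2 : (2 : ℝ) ≤ (p : ℝ) := by exact_mod_cast (hap p hp).two_le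
    have : (p : ℝ)⁻¹ ≤ 1 := by
      rw [inv_le_one_iff₀]; right; linarith
    linarith
  have htot : (a.totient : ℝ) = (a : ℝ) * Pr := by
    have hq := Nat.totient_eq_mul_prod_factors a
    rw [hfact] at hq
    have := congrArg (fun q : ℚ => (q : ℝ)) hq
    push_cast at this
    simpa using this
  refine ⟨(a : ℝ) + 1 + a.totient, by positivity, fun n => ?_⟩
  have hcardle : ∀ k : ℕ, ((k.primesBelow.card : ℝ)) ≤ k := by
    intro k
    have : k.primesBelow.card ≤ k := by
      exact (Finset.card_le_card (Finset.filter_subset _ (Finset.range k))).trans (Finset.card_range k).le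
    exact_mod_cast this
  by_cases hn : n ≤ a + 1
  · have h1 := hcardle n
    have h2 : (n : ℝ) ≤ (a : ℝ) + 1 := by exact_mod_cast hn
    have h3 : 0 ≤ ε * n := by positivity
    have h4 : (0:ℝ) ≤ a.totient := by positivity
    linarith
  · push_neg at hn
    have hk : a + 1 ≤ n := hn.le
    have h := Nat.primeCounting'_add_le (a := a) (k := a + 1) ha0.ne' (lt_add_one a)
      (n - (a + 1))
    rw [Nat.add_sub_cancel' hk] at h
    simp only [← Nat.primesBelow_card_eq_primeCounting'] at h
    have h1 : ((n.primesBelow.card : ℝ)) ≤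
        ((a+1).primesBelow.card : ℝ) + (a.totient : ℝ) * (((n - (a+1)) / a : ℕ) + 1) := by
      exact_mod_cast h
    have h2 : ((a+1).primesBelow.card : ℝ) ≤ (a : ℝ) + 1 := by
      have := hcardle (a + 1); push_cast at this; linarith
    have h3 : ((((n - (a+1)) / a : ℕ)) : ℝ) ≤ (n : ℝ) / a := by
      calc ((((n - (a+1)) / a : ℕ)) : ℝ) ≤ ((n - (a+1) : ℕ) : ℝ) / (a : ℝ) :=
            Nat.cast_div_le
        _ ≤ (n : ℝ) / a := by
            gcongr
            exact_mod_cast Nat.sub_le n (a+1)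
    have h4 : (a.totient : ℝ) * ((n : ℝ) / a) = Pr * n := by
      rw [htot]
      field_simp
    have h5 : (a.totient : ℝ) * (((n - (a+1)) / a : ℕ) + 1) ≤ Pr * n + a.totient := by
      have hφ0 : (0:ℝ) ≤ a.totient := by positivity
      nlinarith [mul_le_mul_of_nonneg_left h3 hφ0]
    have h6 : Pr * n ≤ ε * n := by
      apply mul_le_mul_of_nonneg_right hm.le (by positivity)
    linarith


theorem stmt_4 (f : ℕ → ℝ)
    (hadd : ∀ m n : ℕ, 0 < m → 0 < n → Nat.Coprime m n → f (m * n) = f m + f n)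
    (C δ lam : ℝ) (hC : 0 < C) (hδ0 : 0 < δ) (hδ1 : δ ≤ 1) (hlam : 0 < lam)
    (hb : ∀ p : ℕ, p.Prime → ∀ v : ℕ, 1 ≤ v → |f (p ^ v)| ≤ C / (p : ℝ) ^ δ)
    (hc : ∃ t₀ > 0, ∀ t : ℝ, 0 < t → t ≤ t₀ →
      ∃ p : ℕ, p.Prime ∧ t - t ^ (1 + lam) ≤ f p ∧ f p ≤ t) :
    δ * lam < 1 := by
  by_contra hcon
  push_neg at hcon
  obtain ⟨t₀, ht₀, hC2⟩ := hc
  set K : ℝ := (4 * C) ^ (1 / δ) with hKdef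
  have hK0 : 0 < K := Real.rpow_pos_of_pos (by linarith) _
  obtain ⟨c, hc0, hcard⟩ := aux_primesBelow_card_le (1 / (8 * K)) (by positivity)
  set ε : ℝ := 1 / (8 * K) with hεdef
  have hε0 : 0 < ε := by positivity
  set M : ℝ := 8 * (1 + ε + c) + 1 with hMdef
  have hM0 : 0 < M := by positivity
  set T : ℝ := min t₀ (min ((4 : ℝ) ^ (-(1 / lam))) (M ^ (-(1 / lam)))) with hTdef
  have hT0 : 0 < T :=
    lt_min ht₀ (lt_min (Real.rpow_pos_of_pos (by norm_num) _) (Real.rpow_pos_of_pos hM0 _))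
  have hTlam : T ^ lam ≤ 1 / 4 := by
    have h1 : T ≤ (4 : ℝ) ^ (-(1 / lam)) := le_trans (min_le_right _ _) (min_le_left _ _)
    calc T ^ lam ≤ ((4 : ℝ) ^ (-(1 / lam))) ^ lam :=
          Real.rpow_le_rpow hT0.le h1 hlam.le
      _ = (4 : ℝ) ^ (-(1 / lam) * lam) := (Real.rpow_mul (by norm_num) _ _).symm
      _ = (4 : ℝ) ^ (-1 : ℝ) := by rw [show -(1 / lam) * lam = -1 by field_simp]
      _ = 1 / 4 := by rw [Real.rpow_neg_one]; norm_num
  have hT1 : T ≤ 1 := by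
    by_contra h1
    push_neg at h1
    have : (1 : ℝ) ≤ T ^ lam := by
      have := Real.rpow_le_rpow (by norm_num : (0:ℝ) ≤ 1) h1.le hlam.le
      rwa [Real.one_rpow] at this
    linarith
  -- R := T ^ (-lam)
  set R : ℝ := T ^ (-lam) with hRdef
  have hR0 : 0 < R := Real.rpow_pos_of_pos hT0 _
  have hMR : M ≤ R := by
    have h1 : T ≤ M ^ (-(1 / lam)) := le_trans (min_le_right _ _) (min_le_right _ _)
    calc M = (M ^ (-(1 / lam))) ^ (-lam) := by
          rw [← Real.rpow_mul hM0.le]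
          rw [show -(1 / lam) * -lam = 1 by field_simp]
          rw [Real.rpow_one]
      _ ≤ T ^ (-lam) := Real.rpow_le_rpow_of_nonpos hT0 h1 (neg_nonpos.mpr hlam.le)
  have hTP : 0 < T ^ (1 + lam) := Real.rpow_pos_of_pos hT0 _
  have hT1lam : T ^ (1 + lam) = T * T ^ lam := by
    rw [Real.rpow_add hT0, Real.rpow_one]
  -- the points
  set N : ℕ := ⌊R / 4⌋₊ with hNdef
  have hNle : (N : ℝ) ≤ R / 4 := Nat.floor_le (by positivity)
  have hNge : R / 4 ≤ (N : ℝ) + 1 := (Nat.lt_floor_add_one _).le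
  set t : ℕ → ℝ := fun j => T / 2 + 2 * ((j : ℝ) + 1) * T ^ (1 + lam) with htdef
  have ht_pos : ∀ j : ℕ, 0 < t j := by
    intro j
    have : (0:ℝ) ≤ 2 * ((j : ℝ) + 1) * T ^ (1 + lam) := by positivity
    simp only [htdef]; linarith
  have ht_le : ∀ j < N, t j ≤ T := by
    intro j hj
    have hj1 : (j : ℝ) + 1 ≤ (N : ℝ) := by exact_mod_cast Nat.succ_le_of_lt hj
    have h2 : 2 * ((j : ℝ) + 1) * T ^ (1 + lam) ≤ 2 * (R / 4) * T ^ (1 + lam) := by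
      have := hj1.trans hNle
      nlinarith
    have h3 : R * T ^ (1 + lam) = T := by
      rw [hRdef, ← Real.rpow_add hT0]
      rw [show -lam + (1 + lam) = 1 by ring, Real.rpow_one]
    simp only [htdef]
    nlinarith
  have ht_rlow : ∀ j : ℕ, T / 2 ≤ t j := by
    intro j
    have : (0:ℝ) ≤ 2 * ((j : ℝ) + 1) * T ^ (1 + lam) := by positivity
    simp only [htdef]; linarith
  have ht_pow : ∀ j < N, (t j) ^ (1 + lam) ≤ T ^ (1 + lam) := fun j hj =>
    Real.rpow_le_rpow (ht_pos j).le (ht_le j hj) (by linarith)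
  have ht_low : ∀ j < N, T / 4 ≤ t j - (t j) ^ (1 + lam) := by
    intro j hj
    have h1 := ht_pow j hj
    have h2 : T ^ (1 + lam) ≤ T / 4 := by
      rw [hT1lam]
      nlinarith
    have := ht_rlow j
    linarith
  -- choose primes
  have key : ∀ j : ℕ, ∃ p : ℕ, j < N →
      p.Prime ∧ t j - (t j) ^ (1 + lam) ≤ f p ∧ f p ≤ t j := by
    intro j
    by_cases hj : j < N
    · obtain ⟨p, hp⟩ := hC2 (t j) (ht_pos j) ((ht_le j hj).trans (min_le_left _ _))
      exact ⟨p, fun _ => hp⟩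
    · exact ⟨2, fun h => absurd h hj⟩
  choose P hP using key
  -- bound on primes
  set m : ℕ := ⌊K * R⌋₊ + 1 with hmdef
  have hPmem : ∀ j ∈ Finset.range N, P j ∈ m.primesBelow := by
    intro j hj
    rw [Finset.mem_range] at hj
    obtain ⟨hp, hlo, hhi⟩ := hP j hj
    have hflow : T / 4 ≤ f (P j) := (ht_low j hj).trans hlo
    have habs := hb (P j) hp 1 le_rfl
    rw [pow_one] at habs
    have hpδ : (0:ℝ) < (P j : ℝ) ^ δ :=
      Real.rpow_pos_of_pos (by exact_mod_cast hp.pos) _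
    have h1 : T / 4 ≤ C / (P j : ℝ) ^ δ := hflow.trans ((le_abs_self _).trans habs)
    have h2 : (P j : ℝ) ^ δ ≤ 4 * C / T := by
      rw [div_le_div_iff₀ (by norm_num) hpδ] at h1
      rw [le_div_iff₀ hT0]
      nlinarith
    have h3 : (P j : ℝ) ≤ (4 * C / T) ^ (1 / δ) := by
      have h4 := Real.rpow_le_rpow hpδ.le h2 (by positivity : (0:ℝ) ≤ 1 / δ)
      rwa [← Real.rpow_mul (by positivity : (0:ℝ) ≤ (P j : ℝ)),
        mul_one_div_cancel hδ0.ne', Real.rpow_one] at h4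
    have h5 : (4 * C / T) ^ (1 / δ) ≤ K * R := by
      rw [Real.div_rpow (by linarith) hT0.le, ← hKdef, div_eq_mul_inv,
        ← Real.rpow_neg hT0.le]
      have h6 : T ^ (-(1 / δ)) ≤ T ^ (-lam) := by
        apply Real.rpow_le_rpow_of_exponent_ge hT0 hT1
        have : 1 / δ ≤ lam := by
          rw [div_le_iff₀ hδ0]
          nlinarith
        linarith
      exact mul_le_mul_of_nonneg_left h6 hK0.le
    have h7 : (P j : ℝ) ≤ K * R := h3.trans h5
    have h8 : P j ≤ ⌊K * R⌋₊ := Nat.le_floor h7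
    rw [Nat.mem_primesBelow]
    exact ⟨Nat.lt_succ_of_le h8, hp⟩
  -- injectivity
  have hmono : ∀ i j : ℕ, i < j → j < N → f (P i) < f (P j) := by
    intro i j hij hjN
    have hiN : i < N := hij.trans hjN
    obtain ⟨_, _, hhi_i⟩ := hP i hiN
    obtain ⟨_, hlo_j, _⟩ := hP j hjN
    have h1 : t i + T ^ (1 + lam) ≤ t j - (t j) ^ (1 + lam) := by
      have hd : (1:ℝ) ≤ (j : ℝ) - (i : ℝ) := by
        have : (i:ℝ) + 1 ≤ (j:ℝ) := by exact_mod_cast Nat.succ_le_of_lt hij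
        linarith
      have h2 := ht_pow j hjN
      simp only [htdef]
      nlinarith
    have : t i < t j - (t j) ^ (1 + lam) := by nlinarith
    calc f (P i) ≤ t i := hhi_i
      _ < t j - (t j) ^ (1 + lam) := this
      _ ≤ f (P j) := hlo_j
  have hinj : Set.InjOn P (Finset.range N : Set ℕ) := by
    intro i hi j hj hij
    simp only [Finset.coe_range, Set.mem_Iio] at hi hj
    rcases lt_trichotomy i j with h | h | h
    · exact absurd (congrArg f hij) (hmono i j h hj).ne
    · exact h
    · exact absurd (congrArg f hij) (hmono j i h hi).ne'
  have hcardN : N ≤ m.primesBelow.card := by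
    have := Finset.card_le_card_of_injOn P hPmem hinj
    simpa using this
  -- final contradiction
  have h1 : ((N : ℝ)) ≤ ε * m + c := by
    have := hcard m
    have h2 : (N : ℝ) ≤ (m.primesBelow.card : ℝ) := by exact_mod_cast hcardN
    linarith
  have h2 : (m : ℝ) ≤ K * R + 1 := by
    have : (⌊K * R⌋₊ : ℝ) ≤ K * R := Nat.floor_le (by positivity)
    simp only [hmdef]
    push_cast
    linarith
  have h3 : ε * (K * R) = R / 8 := by
    rw [hεdef]
    field_simp
  have h4 : (N : ℝ) ≤ R / 8 + ε + c := by
    have := mul_le_mul_of_nonneg_left h2 hε0.le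
    nlinarith
  have h5 : R ≤ 8 * (1 + ε + c) := by linarith
  have : M ≤ 8 * (1 + ε + c) := hMR.trans h5
  rw [hMdef] at this
  linarith
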